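/- There exists a group H that is logically noetherian but not geometrically noetherian. (Geometrical noetherianity always implies logical noetherianity, but the converse fails for groups.) -/

import Mathlib

/-- The `H`-closure of a set `S` of elements of the free group on `n` generators. -/
def GClosure (H : Type*) [Group H] {n : ℕ} (S : Set (FreeGroup (Fin n))) :
    Set (FreeGroup (Fin n)) :=
  {w | ∀ φ : FreeGroup (Fin n) →* H, (∀ s ∈ S, φ s = 1) → φ w = 1}

/-- A group `H` is logically noetherian. -/
def LogicallyNoetherian (H : Type*) [Group H] : Prop :=
  ∀ (n : ℕ) (S : Set (FreeGroup (Fin n))) (w : FreeGroup (Fin n)),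
    w ∈ GClosure H S →
      ∃ S₀ : Finset (FreeGroup (Fin n)), ↑S₀ ⊆ S ∧ w ∈ GClosure H (S₀ : Set (FreeGroup (Fin n)))

/-- A group `H` is geometrically noetherian. -/
def GeometricallyNoetherian (H : Type*) [Group H] : Prop :=
  ∀ (n : ℕ) (S : Set (FreeGroup (Fin n))),
    ∃ S₀ : Finset (FreeGroup (Fin n)), ↑S₀ ⊆ S ∧
      GClosure H (S₀ : Set (FreeGroup (Fin n))) = GClosure H S

/-! ### Auxiliary material -/

/-- Compactness for normal closures. -/
theorem mem_normalClosure_finset {G : Type*} [Group G] {S : Set G} {w : G}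
    (hw : w ∈ Subgroup.normalClosure S) :
    ∃ S₀ : Finset G, ↑S₀ ⊆ S ∧ w ∈ Subgroup.normalClosure (S₀ : Set G) := by
  classical
  refine Subgroup.closure_induction
    (p := fun x _ => ∃ S₀ : Finset G, ↑S₀ ⊆ S ∧ x ∈ Subgroup.normalClosure (S₀ : Set G))
    ?_ ?_ ?_ ?_ hw
  · intro x hx
    rcases Group.mem_conjugatesOfSet_iff.1 hx with ⟨a, haS, hconj⟩
    rcases isConj_iff.1 hconj with ⟨c, rfl⟩
    refine ⟨{a}, by simpa using haS, ?_⟩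
    exact Subgroup.normalClosure_normal.conj_mem a
      (Subgroup.subset_normalClosure (by simp)) c
  · exact ⟨∅, by simp, Subgroup.one_mem _⟩
  · rintro x y _ _ ⟨A, hA, hxA⟩ ⟨B, hB, hyB⟩
    refine ⟨A ∪ B, ?_, Subgroup.mul_mem _ ?_ ?_⟩
    · intro t ht
      rcases Finset.mem_union.1 (by exact_mod_cast ht) with h | h
      · exact hA h
      · exact hB h
    · exact Subgroup.normalClosure_mono (Finset.coe_subset.2 Finset.subset_union_left) hxA
    · exact Subgroup.normalClosure_mono (Finset.coe_subset.2 Finset.subset_union_right) hyB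
  · rintro x _ ⟨A, hA, hxA⟩
    exact ⟨A, hA, Subgroup.inv_mem _ hxA⟩

/-- Index type for the witness group: all normal subgroups of all f.g. free groups. -/
def NIdx : Type := Σ n : ℕ, {N : Subgroup (FreeGroup (Fin n)) // N.Normal}

noncomputable instance : DecidableEq NIdx := Classical.decEq _

instance (p : NIdx) : Group (FreeGroup (Fin p.1) ⧸ p.2.1) :=
  @QuotientGroup.Quotient.group _ _ p.2.1 p.2.2

/-- The witness group: product of all quotients of all f.g. free groups. -/
abbrev BigH : Type := ∀ p : NIdx, FreeGroup (Fin p.1) ⧸ p.2.1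

/-- The canonical map onto the component indexed by a normal subgroup `N`. -/
noncomputable def psi {n : ℕ} (N : Subgroup (FreeGroup (Fin n))) (hN : N.Normal) :
    FreeGroup (Fin n) →* BigH :=
  (MonoidHom.mulSingle (fun p : NIdx => FreeGroup (Fin p.1) ⧸ p.2.1) ⟨n, N, hN⟩).comp
    (@QuotientGroup.mk' _ _ N hN)

theorem psi_eq_one {n : ℕ} (N : Subgroup (FreeGroup (Fin n))) (hN : N.Normal)
    (w : FreeGroup (Fin n)) : psi N hN w = 1 ↔ w ∈ N := by
  constructor
  · intro h
    have h2 := congrFun h ⟨n, N, hN⟩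
    simp only [psi, MonoidHom.comp_apply, MonoidHom.mulSingle_apply,
      Pi.mulSingle_eq_same, Pi.one_apply] at h2
    have h3 : QuotientGroup.mk' N w = 1 :=
      (Pi.mulSingle_eq_same (M := fun p : NIdx => FreeGroup (Fin p.1) ⧸ p.2.1) (⟨n, N, hN⟩ : NIdx)
        (QuotientGroup.mk' N w)).symm.trans h2
    exact (@QuotientGroup.eq_one_iff _ _ N hN w).1 h3
  · intro h
    have h1 : QuotientGroup.mk' N w = 1 := (@QuotientGroup.eq_one_iff _ _ N hN w).2 h
    have h2 : psi N hN w
        = MonoidHom.mulSingle (fun p : NIdx => FreeGroup (Fin p.1) ⧸ p.2.1) ⟨n, N, hN⟩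
            (QuotientGroup.mk' N w) := rfl
    rw [h2, h1, map_one]

theorem gclosure_bigH {n : ℕ} (S : Set (FreeGroup (Fin n))) (w : FreeGroup (Fin n)) :
    w ∈ GClosure BigH S ↔ w ∈ Subgroup.normalClosure S := by
  constructor
  · intro hw
    have h1 : ∀ s ∈ S, psi (Subgroup.normalClosure S) Subgroup.normalClosure_normal s = 1 :=
      fun s hs => (psi_eq_one _ _ s).2 (Subgroup.subset_normalClosure hs)
    exact (psi_eq_one _ _ w).1 (hw _ h1)
  · intro hw φ hφ
    have : Subgroup.normalClosure S ≤ φ.ker :=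
      Subgroup.normalClosure_le_normal (fun s hs => hφ s hs)
    exact this hw

/-! ### The relations `r k = [a, bᵏ a b⁻ᵏ]` and permutation representations -/

open scoped commutatorElement

/-- `r k = ⁅a, bᵏ a b⁻ᵏ⁆` in the free group on two generators. -/
def rel (k : ℕ) : FreeGroup (Fin 2) :=
  ⁅FreeGroup.of (0 : Fin 2),
    (FreeGroup.of (1 : Fin 2)) ^ k * FreeGroup.of (0 : Fin 2) *
      ((FreeGroup.of (1 : Fin 2)) ^ k)⁻¹⁆

/-- The representation sending `a` to the transposition `(0 m)` and `b` to the shift. -/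
noncomputable def phiPerm (m : ℕ) : FreeGroup (Fin 2) →* Equiv.Perm ℤ :=
  FreeGroup.lift ![Equiv.swap 0 (m : ℤ), Equiv.addRight (1 : ℤ)]

theorem phiPerm_rel (m k : ℕ) :
    phiPerm m (rel k) = ⁅Equiv.swap (0 : ℤ) (m : ℤ), Equiv.swap (k : ℤ) ((m : ℤ) + k)⁆ := by
  have hb : phiPerm m (FreeGroup.of (1 : Fin 2)) = Equiv.addRight (1 : ℤ) := by
    simp [phiPerm]
  have ha : phiPerm m (FreeGroup.of (0 : Fin 2)) = Equiv.swap 0 (m : ℤ) := by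
    simp [phiPerm]
  have hpow : phiPerm m ((FreeGroup.of (1 : Fin 2)) ^ k) = Equiv.addRight (k : ℤ) := by
    rw [map_pow, hb]
    induction k with
    | zero => ext x; simp
    | succ k ih => ext x; simp [pow_succ, ih, Equiv.Perm.mul_apply, add_assoc]; omega
  have hconj : phiPerm m ((FreeGroup.of (1 : Fin 2)) ^ k * FreeGroup.of (0 : Fin 2) *
      ((FreeGroup.of (1 : Fin 2)) ^ k)⁻¹)
      = Equiv.swap ((k : ℤ)) ((m : ℤ) + k) := by
    rw [map_mul, map_mul, map_inv, hpow, ha]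
    rw [← Equiv.swap_apply_apply]
    simp [Equiv.addRight, add_comm]
  rw [show rel k = ⁅FreeGroup.of (0 : Fin 2),
    (FreeGroup.of (1 : Fin 2)) ^ k * FreeGroup.of (0 : Fin 2) *
      ((FreeGroup.of (1 : Fin 2)) ^ k)⁻¹⁆ from rfl,
    map_commutatorElement, ha, hconj]

theorem swap_commute {α : Type*} [DecidableEq α] {a b c d : α}
    (h1 : a ≠ c) (h2 : a ≠ d) (h3 : b ≠ c) (h4 : b ≠ d) :
    Commute (Equiv.swap a b) (Equiv.swap c d) := by
  apply Equiv.ext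
  intro x
  rcases eq_or_ne x a with rfl | hxa
  · simp [Equiv.Perm.mul_apply, Equiv.swap_apply_of_ne_of_ne h1 h2,
      Equiv.swap_apply_of_ne_of_ne h3 h4]
  rcases eq_or_ne x b with rfl | hxb
  · simp [Equiv.Perm.mul_apply, Equiv.swap_apply_of_ne_of_ne h3 h4,
      Equiv.swap_apply_of_ne_of_ne h1 h2]
  rcases eq_or_ne x c with rfl | hxc
  · simp [Equiv.Perm.mul_apply, Equiv.swap_apply_of_ne_of_ne h1.symm h3.symm,
      Equiv.swap_apply_of_ne_of_ne h2.symm h4.symm]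
  rcases eq_or_ne x d with rfl | hxd
  · simp [Equiv.Perm.mul_apply, Equiv.swap_apply_of_ne_of_ne h2.symm h4.symm,
      Equiv.swap_apply_of_ne_of_ne h1.symm h3.symm]
  · simp [Equiv.Perm.mul_apply, Equiv.swap_apply_of_ne_of_ne hxa hxb,
      Equiv.swap_apply_of_ne_of_ne hxc hxd]

theorem phiPerm_rel_eq_one {m k : ℕ} (hm : 1 ≤ m) (hk : 1 ≤ k) (hne : k ≠ m) :
    phiPerm m (rel k) = 1 := by
  rw [phiPerm_rel, commutatorElement_eq_one_iff_commute]
  refine swap_commute ?_ ?_ ?_ ?_ <;> omega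

theorem phiPerm_rel_ne_one {m : ℕ} (hm : 1 ≤ m) : phiPerm m (rel m) ≠ 1 := by
  rw [phiPerm_rel]
  intro h
  have hm0 : (0 : ℤ) ≠ (m : ℤ) := by omega
  have hm2 : (0 : ℤ) ≠ (m : ℤ) + m := by omega
  have hmm : (m : ℤ) ≠ (m : ℤ) + m := by omega
  have := congrArg (fun σ : Equiv.Perm ℤ => σ 0) h
  simp only [commutatorElement_def, Equiv.Perm.mul_apply, Equiv.swap_inv,
    Equiv.Perm.one_apply] at this
  rw [Equiv.swap_apply_of_ne_of_ne hm0 hm2, Equiv.swap_apply_left,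
    Equiv.swap_apply_left, Equiv.swap_apply_of_ne_of_ne hm2.symm hmm.symm] at this
  omega

/-- The relation map (shifted to start at `1`) is injective. -/
theorem rel_injective : Function.Injective (fun k : ℕ => rel (k + 1)) := by
  intro j k h
  by_contra hne
  have h1 : phiPerm (j + 1) (rel (k + 1)) = 1 :=
    phiPerm_rel_eq_one (by omega) (by omega) (by omega)
  have h2 : phiPerm (j + 1) (rel (j + 1)) ≠ 1 := phiPerm_rel_ne_one (by omega)
  have h' : rel (j + 1) = rel (k + 1) := h
  rw [h'] at h2
  exact h2 h1

/-- There is a group that is logically noetherian but not geometrically noetherian. -/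
theorem exists_logicallyNoetherian_not_geometricallyNoetherian :
    ∃ (H : Type) (instH : Group H),
      @LogicallyNoetherian H instH ∧ ¬ @GeometricallyNoetherian H instH := by
  refine ⟨BigH, inferInstance, ?_, ?_⟩
  · -- logically noetherian
    intro n S w hw
    have hnc : w ∈ Subgroup.normalClosure S := (gclosure_bigH S w).1 hw
    obtain ⟨S₀, hsub, hw0⟩ := mem_normalClosure_finset hnc
    exact ⟨S₀, hsub, (gclosure_bigH _ w).2 hw0⟩
  · -- not geometrically noetherian
    intro hgeo
    obtain ⟨S₀, hsub, heq⟩ := hgeo 2 (Set.range (fun k : ℕ => rel (k + 1)))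
    -- indices realized in S₀ form a finite set
    have hfin : {k : ℕ | rel (k + 1) ∈ (S₀ : Set (FreeGroup (Fin 2)))}.Finite := by
      have : {k : ℕ | rel (k + 1) ∈ (S₀ : Set (FreeGroup (Fin 2)))}
          = (fun k : ℕ => rel (k + 1)) ⁻¹' (S₀ : Set (FreeGroup (Fin 2))) := rfl
      rw [this]
      exact Set.Finite.preimage rel_injective.injOn S₀.finite_toSet
    obtain ⟨m, hm⟩ := (Set.Finite.infinite_compl hfin).nonempty
    have hmem : rel (m + 1) ∈ GClosure BigH (Set.range (fun k : ℕ => rel (k + 1))) := by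
      intro φ hφ
      exact hφ _ ⟨m, rfl⟩
    rw [← heq] at hmem
    -- apply the component map associated to the kernel of `phiPerm (m+1)`
    have hker : (MonoidHom.ker (phiPerm (m + 1))).Normal := MonoidHom.normal_ker _
    have hkill : ∀ s ∈ (S₀ : Set (FreeGroup (Fin 2))),
        psi (MonoidHom.ker (phiPerm (m + 1))) hker s = 1 := by
      intro s hs
      obtain ⟨k, rfl⟩ := hsub hs
      have hkm : k ≠ m := by
        intro hkm; subst hkm; exact hm hs
      rw [psi_eq_one]
      exact phiPerm_rel_eq_one (by omega) (by omega) (by omega)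
    have := hmem _ hkill
    rw [psi_eq_one] at this
    exact phiPerm_rel_ne_one (by omega) this
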